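/- Let γ ≥ 1. There exists a bound N such that for every prime p > N, the γ×γ matrix over the field ℤ/pℤ whose (r, c) entry is the residue of binom(γ−1, r−c) modulo p for r ≥ c (and 0 for r < c) is superregular. -/

import Mathlib

open Matrix

/-- `gg n d` is `choose n d` extended by zero to negative integers `d`. -/
private def gg (n : ℕ) (d : ℤ) : ℤ := if 0 ≤ d then (n.choose d.toNat : ℤ) else 0

private lemma gg_nonneg (n : ℕ) (d : ℤ) : 0 ≤ gg n d := by
  unfold gg; split <;> positivity

private lemma gg_pascal (n : ℕ) (d : ℤ) : gg (n + 1) d = gg n d + gg n (d - 1) := by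
  rcases lt_trichotomy d 0 with h | h | h
  · unfold gg
    rw [if_neg (by omega), if_neg (by omega), if_neg (by omega)]; ring
  · subst h
    simp [gg]
  · obtain ⟨k, rfl⟩ : ∃ k : ℕ, d = (k : ℤ) + 1 := ⟨(d - 1).toNat, by omega⟩
    unfold gg
    rw [if_pos (by positivity), if_pos (by positivity), if_pos (by omega)]
    have h1 : ((k : ℤ) + 1).toNat = k + 1 := by omega
    have h2 : ((k : ℤ) + 1 - 1).toNat = k := by omega
    rw [h1, h2, Nat.choose_succ_succ]
    push_cast; ring

private lemma gg_zero (d : ℤ) : gg 0 d = if d = 0 then 1 else 0 := by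
  unfold gg
  rcases lt_trichotomy d 0 with h | h | h
  · rw [if_neg (by omega), if_neg (by omega)]
  · subst h; simp
  · rw [if_pos h.le, if_neg (by omega)]
    have hk : 0 < d.toNat := by omega
    simp [Nat.choose_eq_zero_of_lt hk]

/-- The `s × s` minor matrix with rows `i` and columns `j`. -/
private def Mk (s n : ℕ) (i j : Fin s → ℤ) : Matrix (Fin s) (Fin s) ℤ :=
  Matrix.of fun μ ν => gg n (i μ - j ν)

private lemma perm_eq_one_of_strictMono {s : ℕ} (σ : Equiv.Perm (Fin s))
    (h : StrictMono (σ : Fin s → Fin s)) : σ = 1 := by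
  have hr : Set.range (σ : Fin s → Fin s) = Set.range (id : Fin s → Fin s) := by
    rw [σ.surjective.range_eq, Set.range_id]
  have := (StrictMono.range_inj h strictMono_id).mp hr
  ext x
  exact congrArg Fin.val (congrFun this x)

private lemma Mk_zero_det {s : ℕ} {i j : Fin s → ℤ} (hi : StrictMono i) (hj : StrictMono j) :
    (Mk s 0 i j).det = ∏ μ, if i μ = j μ then (1 : ℤ) else 0 := by
  rw [Matrix.det_apply, Finset.sum_eq_single 1]
  · simp only [Equiv.Perm.sign_one, one_smul, Equiv.Perm.one_apply]
    congr 1; funext μ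
    simp [Mk, gg_zero, sub_eq_zero]
  · intro σ _ hσ
    by_cases hall : ∀ μ, i (σ μ) = j μ
    · exfalso
      have hmono : StrictMono (σ : Fin s → Fin s) := fun a b hab =>
        hi.lt_iff_lt.mp (by rw [hall a, hall b]; exact hj hab)
      exact hσ (perm_eq_one_of_strictMono σ hmono)
    · push_neg at hall
      obtain ⟨μ, hμ⟩ := hall
      rw [Finset.prod_eq_zero (Finset.mem_univ μ)]
      · simp
      · show Mk s 0 i j (σ μ) μ = 0
        simp [Mk, gg_zero, sub_eq_zero, hμ]
  · intro h; exact absurd (Finset.mem_univ 1) h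

private def rowf (s n : ℕ) (i j : Fin s → ℤ) (μ : Fin s) (b : Bool) : Fin s → ℤ :=
  fun ν => gg n ((i μ - if b then 1 else 0) - j ν)

private lemma Mk_succ_det (s n : ℕ) (i j : Fin s → ℤ) :
    (Mk s (n + 1) i j).det
      = ∑ ε : Fin s → Bool, (Mk s n (fun μ => i μ - if ε μ then 1 else 0) j).det := by
  have h : Mk s (n + 1) i j = Matrix.of fun μ => ∑ b : Bool, rowf s n i j μ b := by
    ext μ ν
    simp only [Mk, Matrix.of_apply, Finset.sum_apply, Fintype.sum_bool, rowf]
    rw [gg_pascal]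
    have e1 : i μ - j ν - 1 = i μ - 1 - j ν := by ring
    rw [e1]
    simp [rowf, add_comm]
  rw [h]
  show (Matrix.detRowAlternating : (Fin s → ℤ) [⋀^Fin s]→ₗ[ℤ] ℤ).toMultilinearMap
      (fun μ => ∑ b : Bool, rowf s n i j μ b) = _
  rw [MultilinearMap.map_sum]
  rfl

private lemma Mk_det_eq_zero {s n : ℕ} (i j : Fin s → ℤ) (hi : Monotone i)
    (h : ¬ StrictMono i) : (Mk s n i j).det = 0 := by
  simp only [StrictMono, not_forall] at h
  obtain ⟨a, b, hab, hba⟩ := h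
  refine Matrix.det_zero_of_row_eq (i := a) (j := b) (fun hEq => absurd hEq hab.ne) ?_
  have : i a = i b := le_antisymm (hi hab.le) (by omega)
  funext ν
  simp [Mk, this]

private lemma sub_bool_monotone {s : ℕ} (i : Fin s → ℤ) (hi : StrictMono i)
    (ε : Fin s → Bool) : Monotone (fun μ => i μ - if ε μ then 1 else 0) := by
  intro a b hab
  rcases lt_or_eq_of_le hab with h | h
  · have := hi h
    dsimp only
    split_ifs <;> omega
  · subst h; exact le_refl _

private lemma Mk_det_nonneg_le {s : ℕ} (n : ℕ) (i j : Fin s → ℤ)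
    (hi : StrictMono i) (hj : StrictMono j) :
    0 ≤ (Mk s n i j).det ∧ (Mk s n i j).det ≤ 2 ^ (n * s) := by
  induction n generalizing i with
  | zero =>
    rw [Mk_zero_det hi hj]
    constructor
    · exact Finset.prod_nonneg fun μ _ => by split <;> norm_num
    · calc (∏ μ, if i μ = j μ then (1 : ℤ) else 0) ≤ 1 :=
            Finset.prod_le_one (fun μ _ => by split <;> norm_num)
              (fun μ _ => by split <;> norm_num)
        _ ≤ 2 ^ (0 * s) := by norm_num
  | succ n IH =>
    rw [Mk_succ_det]
    have key : ∀ ε : Fin s → Bool,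
        0 ≤ (Mk s n (fun μ => i μ - if ε μ then 1 else 0) j).det ∧
        (Mk s n (fun μ => i μ - if ε μ then 1 else 0) j).det ≤ 2 ^ (n * s) := by
      intro ε
      by_cases hm : StrictMono (fun μ => i μ - if ε μ then 1 else 0)
      · exact IH _ hm
      · rw [Mk_det_eq_zero _ j (sub_bool_monotone i hi ε) hm]
        constructor
        · exact le_refl 0
        · positivity
    constructor
    · exact Finset.sum_nonneg fun ε _ => (key ε).1
    · calc (∑ ε : Fin s → Bool, (Mk s n (fun μ => i μ - if ε μ then 1 else 0) j).det)
          ≤ ∑ _ε : Fin s → Bool, (2 : ℤ) ^ (n * s) :=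
            Finset.sum_le_sum fun ε _ => (key ε).2
        _ = (2 : ℤ) ^ s * 2 ^ (n * s) := by
            rw [Finset.sum_const]
            simp [Finset.card_univ, mul_comm]
        _ = 2 ^ ((n + 1) * s) := by rw [← pow_add]; ring_nf

private lemma Mk_det_nonneg {s : ℕ} (n : ℕ) (i j : Fin s → ℤ)
    (hi : Monotone i) (hj : StrictMono j) : 0 ≤ (Mk s n i j).det := by
  by_cases h : StrictMono i
  · exact (Mk_det_nonneg_le n i j h hj).1
  · rw [Mk_det_eq_zero i j hi h]

private lemma Mk_det_pos {s : ℕ} (n : ℕ) (i j : Fin s → ℤ)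
    (hi : StrictMono i) (hj : StrictMono j)
    (hle : ∀ ν, j ν ≤ i ν) (hub : ∀ ν, i ν ≤ j ν + n) :
    1 ≤ (Mk s n i j).det := by
  induction n generalizing i with
  | zero =>
    have hij : i = j := funext fun ν => le_antisymm (by have := hub ν; omega) (hle ν)
    subst hij
    rw [Mk_zero_det hi hj]
    simp
  | succ n IH =>
    rw [Mk_succ_det]
    set ε₀ : Fin s → Bool := fun μ => decide (j μ + n < i μ) with hε₀
    set i₀ : Fin s → ℤ := fun μ => i μ - if ε₀ μ then 1 else 0 with hi₀
    have hi₀min : ∀ μ, i₀ μ = min (i μ) (j μ + n) := by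
      intro μ
      have h1 := hle μ
      have h2 := hub μ
      simp only [hi₀, hε₀, decide_eq_true_eq]
      split_ifs with h <;> omega
    have hi₀mono : StrictMono i₀ := by
      intro a b hab
      rw [hi₀min a, hi₀min b]
      have h1 := hi hab
      have h2 := hj hab
      omega
    have hterm : 1 ≤ (Mk s n i₀ j).det := by
      apply IH i₀ hi₀mono
      · intro ν; rw [hi₀min ν]; have := hle ν; omega
      · intro ν; rw [hi₀min ν]; omega
    calc (1 : ℤ) ≤ (Mk s n (fun μ => i μ - if ε₀ μ then 1 else 0) j).det := hterm
      _ ≤ ∑ ε : Fin s → Bool, (Mk s n (fun μ => i μ - if ε μ then 1 else 0) j).det := by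
          apply Finset.single_le_sum (f := fun ε : Fin s → Bool =>
            (Mk s n (fun μ => i μ - if ε μ then 1 else 0) j).det)
          · intro ε _
            exact Mk_det_nonneg n _ j (sub_bool_monotone i hi ε) hj
          · exact Finset.mem_univ ε₀



/-- A square matrix is a lower triangular Toeplitz matrix if its entries below
and on the diagonal depend only on the difference of the indices, determined by
the first column, and the entries above the diagonal vanish. -/
def IsLTToeplitz {F : Type*} [CommRing F] {m : ℕ}
    (A : Matrix (Fin m) (Fin m) F) : Prop :=
  ∃ a : ℕ → F, ∀ r c : Fin m,
    A r c = if (c : ℕ) ≤ (r : ℕ) then a ((r : ℕ) - (c : ℕ)) else 0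

/-- A square matrix is superregular if it is a lower triangular Toeplitz matrix
and every proper submatrix (rows `i₁ < … < iₛ`, columns `j₁ < … < jₛ` with
`jᵥ ≤ iᵥ` for all `ν`) has a nonzero determinant. -/
def Superregular {F : Type*} [CommRing F] {m : ℕ}
    (A : Matrix (Fin m) (Fin m) F) : Prop :=
  IsLTToeplitz A ∧
  ∀ (s : ℕ) (i j : Fin s → Fin m), StrictMono i → StrictMono j →
    (∀ ν : Fin s, (j ν : ℕ) ≤ (i ν : ℕ)) → (A.submatrix i j).det ≠ 0

/-- There is a bound `N` such that for every prime `p > N`, the `γ × γ` lower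
triangular Toeplitz matrix over `ℤ/pℤ` of binomial coefficients
`binom(γ-1, r-c) mod p` is superregular. -/
theorem binomial_matrix_superregular_mod_large_prime {γ : ℕ} (hγ : 1 ≤ γ) :
    ∃ N : ℕ, ∀ p : ℕ, p.Prime → N < p →
      Superregular (Matrix.of fun r c : Fin γ =>
        if (c : ℕ) ≤ (r : ℕ) then
          ((Nat.choose (γ - 1) ((r : ℕ) - (c : ℕ)) : ℕ) : ZMod p)
        else 0) := by
  refine ⟨2 ^ (γ * γ), fun p hp hNp => ?_⟩
  haveI : NeZero p := ⟨hp.pos.ne'⟩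
  constructor
  · exact ⟨fun k => ((Nat.choose (γ - 1) k : ℕ) : ZMod p), fun r c => rfl⟩
  · intro s i j hi hj hprop
    set iZ : Fin s → ℤ := fun ν => ((i ν : ℕ) : ℤ) with hiZ
    set jZ : Fin s → ℤ := fun ν => ((j ν : ℕ) : ℤ) with hjZ
    have hiZm : StrictMono iZ := by
      intro a b hab
      have h : (i a : ℕ) < (i b : ℕ) := hi hab
      simp only [hiZ]
      exact_mod_cast h
    have hjZm : StrictMono jZ := by
      intro a b hab
      have h : (j a : ℕ) < (j b : ℕ) := hj hab
      simp only [hjZ]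
      exact_mod_cast h
    have hle : ∀ ν, jZ ν ≤ iZ ν := fun ν => by
      simp only [hiZ, hjZ]; exact_mod_cast hprop ν
    have hub : ∀ ν, iZ ν ≤ jZ ν + (γ - 1 : ℕ) := by
      intro ν
      have h1 : (i ν : ℕ) < γ := (i ν).isLt
      simp only [hiZ, hjZ]
      omega
    have hpos : 1 ≤ (Mk s (γ - 1) iZ jZ).det := Mk_det_pos (γ - 1) iZ jZ hiZm hjZm hle hub
    have hsγ : s ≤ γ := by
      have := Fintype.card_le_of_injective i hi.injective
      simpa using this
    have hbound : (Mk s (γ - 1) iZ jZ).det ≤ 2 ^ ((γ - 1) * s) :=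
      (Mk_det_nonneg_le (γ - 1) iZ jZ hiZm hjZm).2
    have hlt : (Mk s (γ - 1) iZ jZ).det < (p : ℤ) := by
      have h1 : (γ - 1) * s ≤ γ * γ := Nat.mul_le_mul (Nat.sub_le γ 1) hsγ
      have h2 : (2 : ℤ) ^ ((γ - 1) * s) ≤ 2 ^ (γ * γ) :=
        pow_le_pow_right₀ (by norm_num) h1
      have h3 : ((2 ^ (γ * γ) : ℕ) : ℤ) < (p : ℤ) := by exact_mod_cast hNp
      push_cast at h3
      omega
    -- identify the submatrix with the mapped integer matrix
    have hEq : (Matrix.of fun r c : Fin γ =>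
        if (c : ℕ) ≤ (r : ℕ) then
          ((Nat.choose (γ - 1) ((r : ℕ) - (c : ℕ)) : ℕ) : ZMod p)
        else 0).submatrix i j
        = (Mk s (γ - 1) iZ jZ).map (Int.cast : ℤ → ZMod p) := by
      ext μ ν
      simp only [Matrix.submatrix_apply, Matrix.of_apply, Matrix.map_apply, Mk, gg, hiZ, hjZ]
      by_cases h : (j ν : ℕ) ≤ (i μ : ℕ)
      · rw [if_pos h, if_pos (by push_cast; omega)]
        have ht : (((i μ : ℕ) : ℤ) - ((j ν : ℕ) : ℤ)).toNat = (i μ : ℕ) - (j ν : ℕ) := by omega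
        rw [ht]
        push_cast
        rfl
      · rw [if_neg h, if_neg (by omega)]
        simp
    rw [hEq]
    have hdet : ((Mk s (γ - 1) iZ jZ).map (Int.cast : ℤ → ZMod p)).det
        = (((Mk s (γ - 1) iZ jZ).det : ℤ) : ZMod p) :=
      ((Int.castRingHom (ZMod p)).map_det _).symm
    rw [hdet]
    intro h0
    rw [ZMod.intCast_zmod_eq_zero_iff_dvd] at h0
    have := Int.le_of_dvd (by omega) h0
    omega
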